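/- arXiv:1105.2471 — 4 statements merged into one kernel-verified Lean document; each statement's English description precedes it below -/
import Mathlib

section
/- In the free product G' = Z₂ * Z₂ * Z₂, if a, b, c are generators of the three Z₂ factors, then the subgroup generated by a, bab⁻¹ and cac⁻¹ is isomorphic to the free product Z₂ * Z₂ * Z₂. -/
/-- The free product `Z₂ * Z₂ * Z₂`. -/
abbrev Z2Z2Z2 : Type := Monoid.CoprodI (fun _ : Fin 3 => Multiplicative (ZMod 2))

/-- Generators of the three `Z₂` factors. -/
def z2gen (i : Fin 3) : Z2Z2Z2 :=
  Monoid.CoprodI.of (i := i) (Multiplicative.ofAdd (1 : ZMod 2))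

open Monoid CoprodI

/-- If `m ≠ 1`, acting by `of m` on a word whose first index is not `k` gives a word
with first index `k`. -/
lemma Z2aux_fstIdx_of_smul {ι : Type*} [DecidableEq ι] {G : ι → Type*}
    [∀ i, Monoid (G i)] [∀ i, DecidableEq (G i)] {k : ι} (m : G k) (hm : m ≠ 1)
    (w : Monoid.CoprodI.Word G) (hw : w.fstIdx ≠ some k) :
    (Monoid.CoprodI.of m • w).fstIdx = some k := by
  rw [← Word.cons_eq_smul (h1 := hw) (h2 := hm)]
  exact Word.fstIdx_cons m w hw hm

namespace Z2aux

abbrev M : Fin 3 → Type := fun _ => Multiplicative (ZMod 2)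

abbrev g : Multiplicative (ZMod 2) := Multiplicative.ofAdd 1

/-- Shorthand for the canonical inclusions. -/
abbrev o (k : Fin 3) (m : Multiplicative (ZMod 2)) : Z2Z2Z2 :=
  Monoid.CoprodI.of (M := M) (i := k) m

/-- The target elements: `t i = (z2gen i) * (z2gen 0) * (z2gen i)⁻¹`. -/
def t (i : Fin 3) : Z2Z2Z2 := z2gen i * z2gen 0 * (z2gen i)⁻¹

/-- The homomorphisms defining `lift f`. -/
def f (i : Fin 3) : Multiplicative (ZMod 2) →* Z2Z2Z2 :=
  ((MulAut.conj (z2gen i)).toMonoidHom).comp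
    (Monoid.CoprodI.of (M := M) (i := (0 : Fin 3)))

lemma f_apply (i : Fin 3) (h : Multiplicative (ZMod 2)) :
    f i h = z2gen i * o 0 h * (z2gen i)⁻¹ := by
  simp [f, MulAut.conj, mul_assoc]

lemma f_g (i : Fin 3) : f i g = t i := by
  rw [f_apply]; rfl

lemma injective_lift : Function.Injective (Monoid.CoprodI.lift f) := by
  classical
  set X : Fin 3 → Set (Word M) := fun i => {w | w.fstIdx = some i} with hX
  apply Monoid.CoprodI.lift_injective_of_ping_pong f (Or.inl (by simp)) X
  · intro i
    have hg : (g : Multiplicative (ZMod 2)) ≠ 1 := by decide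
    refine ⟨Word.cons (M := M) (i := i) g Word.empty ?_ hg, ?_⟩
    · simp [Word.fstIdx, Word.empty]
    · exact Word.fstIdx_cons _ _ _ _
  · intro i j hij
    refine Set.disjoint_left.mpr ?_
    rintro w (hwi : w.fstIdx = some i) (hwj : w.fstIdx = some j)
    exact hij (Option.some_injective _ (hwi.symm.trans hwj))
  · intro i j hij h hh
    rintro x ⟨w, (hwj : w.fstIdx = some j), rfl⟩
    have hg : (g : Multiplicative (ZMod 2)) ≠ 1 := by decide
    have hginv : ((g : Multiplicative (ZMod 2))⁻¹) ≠ 1 := by decide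
    by_cases hi0 : i = 0
    · subst hi0
      have hf : f 0 h = o 0 h := by
        rw [f_apply]
        show o 0 g * o 0 h * (o 0 g)⁻¹ = _
        rw [← map_inv, ← map_mul, ← map_mul]
        congr 1
        rw [mul_comm g h, mul_inv_cancel_right]
      show (f 0 h • w).fstIdx = some 0
      rw [hf]
      exact Z2aux_fstIdx_of_smul (G := M) h hh w (by rw [hwj]; simp [Ne.symm hij])
    · have hrw : f i h = o i g * o 0 h * o i g⁻¹ := by
        have hinv : o i g⁻¹ = (o i g)⁻¹ := map_inv _ g
        rw [f_apply, hinv]; rfl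
      show (f i h • w).fstIdx = some i
      rw [hrw, mul_smul, mul_smul]
      have h1 : (o i g⁻¹ • w).fstIdx = some i :=
        Z2aux_fstIdx_of_smul (G := M) g⁻¹ hginv w (by rw [hwj]; simp [Ne.symm hij])
      have h2 : (o 0 h • (o i g⁻¹ • w)).fstIdx = some (0 : Fin 3) :=
        Z2aux_fstIdx_of_smul (G := M) h hh _ (by rw [h1]; simp [hi0])
      exact Z2aux_fstIdx_of_smul (G := M) g hg _ (by rw [h2]; simp [Ne.symm hi0])

lemma top_eq_closure_g :
    (⊤ : Subgroup (Multiplicative (ZMod 2))) = Subgroup.closure {g} := by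
  refine ((Subgroup.eq_top_iff' _).mpr ?_).symm
  intro x
  have : x = 1 ∨ x = g := by revert x; decide
  rcases this with rfl | rfl
  · exact one_mem _
  · exact Subgroup.subset_closure rfl

lemma range_f (i : Fin 3) : (f i).range = Subgroup.closure {t i} := by
  rw [MonoidHom.range_eq_map, top_eq_closure_g, MonoidHom.map_closure, Set.image_singleton, f_g]

lemma range_lift :
    (Monoid.CoprodI.lift f).range = Subgroup.closure {t 0, t 1, t 2} := by
  rw [Monoid.CoprodI.range_eq_iSup]
  have hset : ({t 0, t 1, t 2} : Set Z2Z2Z2) = ⋃ i, {t i} := by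
    ext x
    simp only [Set.mem_insert_iff, Set.mem_singleton_iff, Set.mem_iUnion]
    constructor
    · rintro (rfl | rfl | rfl)
      exacts [⟨0, rfl⟩, ⟨1, rfl⟩, ⟨2, rfl⟩]
    · rintro ⟨i, rfl⟩
      fin_cases i <;> simp
  rw [hset, Subgroup.closure_iUnion]
  exact iSup_congr range_f

lemma t_zero : t 0 = z2gen 0 := mul_inv_cancel_right _ _

end Z2aux

/-- In `Z₂ * Z₂ * Z₂ = ⟨a, b, c⟩`, the subgroup generated by `a`, `bab⁻¹` and
`cac⁻¹` is isomorphic to `Z₂ * Z₂ * Z₂`. -/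
theorem subgroup_closure_conj_invol_iso :
    Nonempty
      ((Subgroup.closure {z2gen 0, z2gen 1 * z2gen 0 * (z2gen 1)⁻¹,
        z2gen 2 * z2gen 0 * (z2gen 2)⁻¹} : Subgroup Z2Z2Z2) ≃* Z2Z2Z2) := by
  have hrange : (Monoid.CoprodI.lift Z2aux.f).range =
      Subgroup.closure {z2gen 0, z2gen 1 * z2gen 0 * (z2gen 1)⁻¹,
        z2gen 2 * z2gen 0 * (z2gen 2)⁻¹} := by
    rw [Z2aux.range_lift, Z2aux.t_zero]; rfl
  exact ⟨(MulEquiv.subgroupCongr hrange.symm).trans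
    (MonoidHom.ofInjective Z2aux.injective_lift).symm⟩
end

section
/- In G' = Z₂ * (Z₂ × Z₂) = ⟨a, b, c | a² = b² = c² = (bc)² = 1⟩, if H₁' and H₂' are subgroups with acac ∈ H₁' and (acac)⁻¹(ab)(acac), acababa, abcac ∈ H₂', then H₁'H₂' = G'. -/
open Pointwise

/-- In `G' = Z₂ * (Z₂ × Z₂) = ⟨a, b, c | a² = b² = c² = (bc)² = 1⟩`: if
`acac ∈ H₁'` and `(acac)⁻¹(ab)(acac), acababa, abcac ∈ H₂'`, then `H₁'H₂' = G'`. -/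
theorem product_eq_univ_Z2_Z2xZ2
    (H₁ H₂ : Subgroup (Monoid.Coprod (Multiplicative (ZMod 2))
      (Multiplicative (ZMod 2) × Multiplicative (ZMod 2))))
    (a b c : Monoid.Coprod (Multiplicative (ZMod 2))
      (Multiplicative (ZMod 2) × Multiplicative (ZMod 2)))
    (ha : a = Monoid.Coprod.inl (Multiplicative.ofAdd (1 : ZMod 2)))
    (hb : b = Monoid.Coprod.inr (Multiplicative.ofAdd (1 : ZMod 2), 1))
    (hc : c = Monoid.Coprod.inr (1, Multiplicative.ofAdd (1 : ZMod 2)))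
    (h1 : a * c * a * c ∈ H₁)
    (h2 : (a * c * a * c)⁻¹ * (a * b) * (a * c * a * c) ∈ H₂)
    (h2' : a * c * a * b * a * b * a ∈ H₂)
    (h2'' : a * b * c * a * c ∈ H₂) :
    (↑H₁ * ↑H₂ : Set (Monoid.Coprod (Multiplicative (ZMod 2)) (Multiplicative (ZMod 2) × Multiplicative (ZMod 2)))) = Set.univ := by
  -- basic relations
  have haa : a * a = 1 := by
    rw [ha, ← map_mul, show (Multiplicative.ofAdd (1 : ZMod 2)) * Multiplicative.ofAdd 1 = 1 from by decide, map_one]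
  have hbb : b * b = 1 := by
    rw [hb, ← map_mul, show ((Multiplicative.ofAdd (1 : ZMod 2), (1 : Multiplicative (ZMod 2))) : _ × _) * (Multiplicative.ofAdd 1, 1) = 1 from by decide, map_one]
  have hcc : c * c = 1 := by
    rw [hc, ← map_mul, show (((1 : Multiplicative (ZMod 2)), Multiplicative.ofAdd (1 : ZMod 2)) : _ × _) * (1, Multiplicative.ofAdd 1) = 1 from by decide, map_one]
  have hbc : b * c = c * b := by
    rw [hb, hc, ← map_mul, ← map_mul]
    norm_num
  have ia : a⁻¹ = a := inv_eq_of_mul_eq_one_right haa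
  have ib : b⁻¹ = b := inv_eq_of_mul_eq_one_right hbb
  have ic : c⁻¹ = c := inv_eq_of_mul_eq_one_right hcc
  have haa' : ∀ x, a * (a * x) = x := fun x => by rw [← mul_assoc, haa, one_mul]
  have hbb' : ∀ x, b * (b * x) = x := fun x => by rw [← mul_assoc, hbb, one_mul]
  have hcc' : ∀ x, c * (c * x) = x := fun x => by rw [← mul_assoc, hcc, one_mul]
  have hbcb : b * (c * b) = c := by rw [← mul_assoc, hbc, mul_assoc, hbb, mul_one]
  have hcbc : c * (b * c) = b := by rw [← mul_assoc, ← hbc, mul_assoc, hcc, mul_one]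
  have hbcb' : ∀ x, b * (c * (b * x)) = c * x := fun x => by
    rw [← mul_assoc, ← mul_assoc, hbc, mul_assoc c b b, hbb, mul_one]
  have hcbc' : ∀ x, c * (b * (c * x)) = b * x := fun x => by
    rw [← mul_assoc, ← mul_assoc, ← hbc, mul_assoc b c c, hcc, mul_one]
  -- cac ∈ H₂
  have hq : c * a * c ∈ H₂ := by
    have h := mul_mem h2'' h2
    simp only [mul_inv_rev, ia, ib, ic, mul_assoc, haa', hbb', hcc', hbcb', hcbc',
      haa, hbb, hcc, hbcb, hcbc, mul_one, one_mul] at h ⊢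
    exact h
  -- ab ∈ H₂
  have hu : a * b ∈ H₂ := by
    have h := mul_mem h2'' hq
    simp only [mul_assoc, haa', hbb', hcc', hbcb', hcbc', haa, hbb, hcc, hbcb, hcbc,
      mul_one, one_mul] at h ⊢
    exact h
  -- aca ∈ H₂
  have hp : a * c * a ∈ H₂ := by
    have h := mul_mem (mul_mem h2' hu) hu
    simp only [mul_assoc, haa', hbb', hcc', hbcb', hcbc', haa, hbb, hcc, hbcb, hcbc,
      mul_one, one_mul] at h ⊢
    exact h
  -- c ∈ H₂
  have hc2 : c ∈ H₂ := by
    have h := mul_mem (mul_mem (inv_mem hu) hp) hu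
    simp only [mul_inv_rev, ia, ib, mul_assoc, haa', hbb', hcc', hbcb', hcbc',
      haa, hbb, hcc, hbcb, hcbc, mul_one, one_mul] at h
    exact h
  -- a ∈ H₂  (a = p * u⁻¹ * p * u * q)
  have ha2 : a ∈ H₂ := by
    have h := mul_mem (mul_mem (mul_mem (mul_mem hp (inv_mem hu)) hp) hu) hq
    simp only [mul_inv_rev, ia, ib, mul_assoc, haa', hbb', hcc', hbcb', hcbc',
      haa, hbb, hcc, hbcb, hcbc, mul_one, one_mul] at h
    exact h
  -- b ∈ H₂
  have hb2 : b ∈ H₂ := by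
    have h := mul_mem (inv_mem hu) ha2
    simp only [mul_inv_rev, ia, ib, mul_assoc, haa', hbb', hcc', hbcb', hcbc',
      haa, hbb, hcc, hbcb, hcbc, mul_one, one_mul] at h
    exact h
  -- H₂ = ⊤
  have htop : ∀ g : Monoid.Coprod (Multiplicative (ZMod 2))
      (Multiplicative (ZMod 2) × Multiplicative (ZMod 2)), g ∈ H₂ := by
    intro g
    induction g using Monoid.Coprod.induction_on with
    | inl m =>
      have : m = 1 ∨ m = Multiplicative.ofAdd (1 : ZMod 2) := by revert m; decide
      rcases this with rfl | rfl
      · simpa using H₂.one_mem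
      · rw [← ha]; exact ha2
    | inr n =>
      have : n = 1 ∨ n = (Multiplicative.ofAdd (1 : ZMod 2), 1) ∨
          n = (1, Multiplicative.ofAdd (1 : ZMod 2)) ∨
          n = (Multiplicative.ofAdd (1 : ZMod 2), Multiplicative.ofAdd (1 : ZMod 2)) := by
        revert n; decide
      rcases this with rfl | rfl | rfl | rfl
      · simpa using H₂.one_mem
      · rw [← hb]; exact hb2
      · rw [← hc]; exact hc2
      · have : (Monoid.Coprod.inr ((Multiplicative.ofAdd (1 : ZMod 2),
            Multiplicative.ofAdd (1 : ZMod 2)) : _ × _) :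
            Monoid.Coprod (Multiplicative (ZMod 2))
              (Multiplicative (ZMod 2) × Multiplicative (ZMod 2))) = b * c := by
          rw [hb, hc, ← map_mul]
          norm_num
        rw [this]; exact mul_mem hb2 hc2
    | mul x y hx hy => exact mul_mem hx hy
  apply Set.eq_univ_of_forall
  intro g
  exact (one_mul g) ▸ Set.mul_mem_mul H₁.one_mem (htop g)
end

section
/- Let G' = Z₂ * (Z₂ × Z₂) = ⟨a, b, c | a² = b² = c² = (bc)² = 1⟩ and let n ≥ 1. Then the quotient of G' by the normal closure of {acac, (ab)^{n+1}} is isomorphic to D_{n+1} × Z₂, where D_{n+1} is the dihedral group of order 2(n+1). -/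
section helpers
variable {G : Type*} [Group G]

/-- Hom from `Multiplicative (ZMod 2)` determined by an element of square one. -/
def homZ2 (e : G) (he : e * e = 1) : Multiplicative (ZMod 2) →* G where
  toFun x := e ^ (Multiplicative.toAdd x).val
  map_one' := by
    show e ^ (0 : ZMod 2).val = 1
    simp
  map_mul' x y := by
    have h2 : e ^ 2 = 1 := by rwa [pow_two]
    show e ^ ((Multiplicative.toAdd x + Multiplicative.toAdd y).val) = _
    rw [ZMod.val_add, ← pow_eq_pow_mod _ h2, pow_add]

@[simp] lemma homZ2_ofAdd_one (e : G) (he : e * e = 1) :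
    homZ2 e he (Multiplicative.ofAdd 1) = e := by
  show e ^ (1 : ZMod 2).val = e
  norm_num [ZMod.val_one]

lemma homZ2_apply (e : G) (he : e * e = 1) (x : Multiplicative (ZMod 2)) :
    homZ2 e he x = e ^ (Multiplicative.toAdd x).val := rfl

/-- zpow periodicity through `ZMod`. -/
lemma zpow_congr_zmod {m : ℕ} [NeZero m] (w : G) (hw : w ^ m = 1)
    (a b : ℤ) (h : (a : ZMod m) = (b : ZMod m)) : w ^ a = w ^ b := by
  have hd : ((m : ℤ)) ∣ b - a :=
    Int.ModEq.dvd ((ZMod.intCast_eq_intCast_iff' a b m).mp h)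
  obtain ⟨k, hk⟩ := hd
  have hb : b = a + m * k := by linarith
  have hwz : w ^ (m : ℤ) = 1 := by rw [zpow_natCast, hw]
  rw [hb, zpow_add, zpow_mul, hwz, one_zpow, mul_one]

end helpers

/-- `G' = Z₂ * (Z₂ × Z₂)`. -/
abbrev GZ2xZ2 : Type :=
  Monoid.Coprod (Multiplicative (ZMod 2)) (Multiplicative (ZMod 2) × Multiplicative (ZMod 2))

def gA : GZ2xZ2 := Monoid.Coprod.inl (Multiplicative.ofAdd (1 : ZMod 2))
def gB : GZ2xZ2 := Monoid.Coprod.inr (Multiplicative.ofAdd (1 : ZMod 2), 1)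
def gC : GZ2xZ2 := Monoid.Coprod.inr (1, Multiplicative.ofAdd (1 : ZMod 2))

namespace QIDP

variable (n : ℕ)

open DihedralGroup Monoid Multiplicative

lemma hsr0 : (sr 0 : DihedralGroup (n + 1)) * sr 0 = 1 := sr_mul_self 0
lemma hsr1 : (sr 1 : DihedralGroup (n + 1)) * sr 1 = 1 := sr_mul_self 1

/-- The map `G' → D_{n+1} × Z₂`, `a ↦ (sr 0, 1)`, `b ↦ (sr 1, 1)`, `c ↦ (1, x)`. -/
def phi0 : GZ2xZ2 →* DihedralGroup (n + 1) × Multiplicative (ZMod 2) :=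
  Monoid.Coprod.lift
    ((homZ2 (sr 0) (hsr0 n)).prod (1 : Multiplicative (ZMod 2) →* Multiplicative (ZMod 2)))
    ((homZ2 (sr 1) (hsr1 n)).prodMap (MonoidHom.id (Multiplicative (ZMod 2))))

@[simp] lemma phi0_gA : phi0 n gA = (sr 0, 1) := by
  simp [phi0, gA, Monoid.Coprod.lift_apply_inl, MonoidHom.prod_apply]

@[simp] lemma phi0_gB : phi0 n gB = (sr 1, 1) := by
  simp [phi0, gB, Monoid.Coprod.lift_apply_inr, MonoidHom.prodMap]

@[simp] lemma phi0_gC : phi0 n gC = (1, Multiplicative.ofAdd 1) := by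
  simp [phi0, gC, Monoid.Coprod.lift_apply_inr, MonoidHom.prodMap, homZ2_apply]

lemma gBgC_eq : gB * gC = Monoid.Coprod.inr
    (Multiplicative.ofAdd (1 : ZMod 2), Multiplicative.ofAdd (1 : ZMod 2)) := by
  have h1 : ((Multiplicative.ofAdd (1 : ZMod 2), (1 : Multiplicative (ZMod 2))) *
      (1, Multiplicative.ofAdd 1) :
      Multiplicative (ZMod 2) × Multiplicative (ZMod 2)) =
      (Multiplicative.ofAdd 1, Multiplicative.ofAdd 1) := by decide
  rw [gB, gC, ← map_mul, h1]

end QIDP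

set_option maxHeartbeats 1600000 in
/-- The quotient of `G' = Z₂ * (Z₂ × Z₂) = ⟨a, b, c | a² = b² = c² = (bc)² = 1⟩` by the
normal closure of `{acac, (ab)^{n+1}}` is isomorphic to `D_{n+1} × Z₂`. -/
theorem quotient_iso_dihedral_prod (n : ℕ) (hn : 1 ≤ n) :
    Nonempty
      ((GZ2xZ2 ⧸ Subgroup.normalClosure {gA * gC * gA * gC, (gA * gB) ^ (n + 1)}) ≃*
        DihedralGroup (n + 1) × Multiplicative (ZMod 2)) := by
  classical
  haveI : Fact (1 < n + 1) := ⟨by omega⟩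
  open DihedralGroup Multiplicative in
  set N := Subgroup.normalClosure {gA * gC * gA * gC, (gA * gB) ^ (n + 1)} with hN
  -- `phi0` kills the two relators
  have hmem1 : QIDP.phi0 n (gA * gC * gA * gC) = 1 := by
    simp only [map_mul, QIDP.phi0_gA, QIDP.phi0_gC, Prod.mk_mul_mk]
    rw [Prod.mk_eq_one]
    constructor
    · rw [mul_one, mul_one, sr_mul_self]
    · decide
  have hmem2 : QIDP.phi0 n ((gA * gB) ^ (n + 1)) = 1 := by
    rw [map_pow, map_mul, QIDP.phi0_gA, QIDP.phi0_gB, Prod.mk_mul_mk, sr_mul_sr,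
      sub_zero, mul_one, Prod.pow_mk, one_pow, r_one_pow, ZMod.natCast_self, ← one_def]
    rfl
  have hker : ∀ x ∈ N, QIDP.phi0 n x = 1 := by
    intro x hx
    have hle : N ≤ (QIDP.phi0 n).ker := by
      rw [hN]
      refine Subgroup.normalClosure_le_normal ?_
      intro y hy
      simp only [Set.mem_insert_iff, Set.mem_singleton_iff] at hy
      rcases hy with rfl | rfl
      · exact hmem1
      · exact hmem2
    exact MonoidHom.mem_ker.mp (hle hx)
  set π : GZ2xZ2 →* GZ2xZ2 ⧸ N := QuotientGroup.mk' N with hπ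
  set φ : (GZ2xZ2 ⧸ N) →* DihedralGroup (n + 1) × Multiplicative (ZMod 2) :=
    QuotientGroup.lift N (QIDP.phi0 n) hker with hφ
  set A : GZ2xZ2 ⧸ N := π gA with hAdef
  set B : GZ2xZ2 ⧸ N := π gB with hBdef
  set C : GZ2xZ2 ⧸ N := π gC with hCdef
  set w : GZ2xZ2 ⧸ N := A * B with hwdef
  clear_value A B C w
  -- relations already valid in G'
  have hgA2 : gA * gA = 1 := by
    rw [gA, ← map_mul]
    have h1 : Multiplicative.ofAdd (1 : ZMod 2) * Multiplicative.ofAdd 1 = 1 := by decide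
    rw [h1, map_one]
  have hgB2 : gB * gB = 1 := by
    rw [gB, ← map_mul]
    have h1 : ((Multiplicative.ofAdd (1 : ZMod 2), (1 : Multiplicative (ZMod 2))) *
        (Multiplicative.ofAdd 1, 1) :
        Multiplicative (ZMod 2) × Multiplicative (ZMod 2)) = 1 := by decide
    rw [h1, map_one]
  have hgC2 : gC * gC = 1 := by
    rw [gC, ← map_mul]
    have h1 : (((1 : Multiplicative (ZMod 2)), Multiplicative.ofAdd (1 : ZMod 2)) *
        (1, Multiplicative.ofAdd 1) :
        Multiplicative (ZMod 2) × Multiplicative (ZMod 2)) = 1 := by decide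
    rw [h1, map_one]
  have hgBC : gB * gC = gC * gB := by
    have h1 : ((Multiplicative.ofAdd (1 : ZMod 2), (1 : Multiplicative (ZMod 2))) *
        (1, Multiplicative.ofAdd 1) :
        Multiplicative (ZMod 2) × Multiplicative (ZMod 2)) =
        (1, Multiplicative.ofAdd 1) * (Multiplicative.ofAdd 1, 1) := by decide
    rw [gB, gC, ← map_mul, ← map_mul, h1]
  have hA : A * A = 1 := by rw [hAdef, ← map_mul, hgA2, map_one]
  have hB : B * B = 1 := by rw [hBdef, ← map_mul, hgB2, map_one]
  have hC : C * C = 1 := by rw [hCdef, ← map_mul, hgC2, map_one]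
  have hBC : B * C = C * B := by rw [hBdef, hCdef, ← map_mul, ← map_mul, hgBC]
  have hAinv : A⁻¹ = A := inv_eq_of_mul_eq_one_right hA
  have hBinv : B⁻¹ = B := inv_eq_of_mul_eq_one_right hB
  have hCinv : C⁻¹ = C := inv_eq_of_mul_eq_one_right hC
  -- relations from the quotient
  have hACq : A * C * A * C = 1 := by
    rw [hAdef, hCdef, ← map_mul, ← map_mul, ← map_mul]
    exact (QuotientGroup.eq_one_iff _).mpr
      (Subgroup.subset_normalClosure (by left; rfl))
  have hwn : w ^ (n + 1) = 1 := by
    rw [hwdef, hAdef, hBdef, ← map_mul, ← map_pow]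
    exact (QuotientGroup.eq_one_iff _).mpr
      (Subgroup.subset_normalClosure (by right; rfl))
  have hAC : A * C = C * A := by
    have h1 : (A * C) * (A * C) = 1 := by rw [← mul_assoc]; exact hACq
    have h2 : (A * C)⁻¹ = A * C := inv_eq_of_mul_eq_one_right h1
    calc A * C = (A * C)⁻¹ := h2.symm
    _ = C⁻¹ * A⁻¹ := mul_inv_rev _ _
    _ = C * A := by rw [hAinv, hCinv]
  -- semiconjugation
  have hAw : A * w = w⁻¹ * A := by
    have e1 : A * w = B := by rw [hwdef, ← mul_assoc, hA, one_mul]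
    have e2 : w⁻¹ * A = B := by
      rw [hwdef, mul_inv_rev, hAinv, hBinv, mul_assoc, hA, mul_one]
    rw [e1, e2]
  have hsc : ∀ k : ℤ, A * w ^ k = w ^ (-k) * A := by
    intro k
    have hscb : SemiconjBy A w w⁻¹ := hAw
    have h := hscb.zpow_right k
    simpa [zpow_neg, inv_zpow] using h.eq
  have hws : ∀ k : ℤ, w ^ k * A = A * w ^ (-k) := by
    intro k
    rw [hsc (-k), neg_neg]
  have key : ∀ (i : ZMod (n + 1)) (k : ℤ), ((k : ZMod (n + 1)) = i) →
      w ^ ((i.val : ℤ)) = w ^ k := by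
    intro i k hk
    refine zpow_congr_zmod w hwn _ _ ?_
    have : ((i.val : ℤ) : ZMod (n + 1)) = i := by
      push_cast
      rw [ZMod.natCast_val, ZMod.cast_id]
    rw [this, hk]
  -- map from the dihedral group
  let ψD : DihedralGroup (n + 1) →* GZ2xZ2 ⧸ N := MonoidHom.mk'
    (fun d => match d with
      | .r i => w ^ (i.val : ℤ)
      | .sr i => A * w ^ (i.val : ℤ))
    (by
      rintro (i | i) (j | j)
      · show w ^ (((i + j).val : ℤ)) = w ^ ((i.val : ℤ)) * w ^ ((j.val : ℤ))
        rw [← zpow_add]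
        refine key _ _ ?_
        push_cast
        rw [ZMod.natCast_val, ZMod.cast_id, ZMod.natCast_val, ZMod.cast_id]
      · show A * w ^ (((j - i).val : ℤ)) = w ^ ((i.val : ℤ)) * (A * w ^ ((j.val : ℤ)))
        rw [← mul_assoc, hws, mul_assoc A, ← zpow_add]
        congr 1
        refine key _ _ ?_
        push_cast
        rw [ZMod.natCast_val, ZMod.cast_id, ZMod.natCast_val, ZMod.cast_id]
        ring
      · show A * w ^ (((i + j).val : ℤ)) = (A * w ^ ((i.val : ℤ))) * w ^ ((j.val : ℤ))
        rw [mul_assoc A, ← zpow_add]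
        congr 1
        refine key _ _ ?_
        push_cast
        rw [ZMod.natCast_val, ZMod.cast_id, ZMod.natCast_val, ZMod.cast_id]
      · show w ^ (((j - i).val : ℤ)) = (A * w ^ ((i.val : ℤ))) * (A * w ^ ((j.val : ℤ)))
        rw [mul_assoc A, ← mul_assoc (w ^ ((i.val : ℤ))), hws, ← mul_assoc A,
          ← mul_assoc A, hA, one_mul, ← zpow_add]
        refine key _ _ ?_
        push_cast
        rw [ZMod.natCast_val, ZMod.cast_id, ZMod.natCast_val, ZMod.cast_id]
        ring)
  have hψD_r : ∀ i : ZMod (n + 1), ψD (r i) = w ^ ((i.val : ℤ)) := fun i => rfl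
  have hψD_sr : ∀ i : ZMod (n + 1), ψD (sr i) = A * w ^ ((i.val : ℤ)) := fun i => rfl
  let ψC : Multiplicative (ZMod 2) →* GZ2xZ2 ⧸ N := homZ2 C hC
  have hψC : ∀ z, ψC z = C ^ (Multiplicative.toAdd z).val := fun z => rfl
  have hcAC : Commute A C := hAC
  have hcBC : Commute B C := hBC
  have hwC : Commute w C := by
    rw [hwdef]
    exact hcAC.mul_left hcBC
  have hcomm : ∀ d z, Commute (ψD d) (ψC z) := by
    intro d z
    have hC' : Commute (ψD d) C := by
      rcases d with i | i
      · exact hwC.zpow_left _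
      · exact hcAC.mul_left (hwC.zpow_left _)
    rw [hψC]
    exact hC'.pow_right _
  let ψ : (DihedralGroup (n + 1) × Multiplicative (ZMod 2)) →* GZ2xZ2 ⧸ N :=
    ψD.noncommCoprod ψC hcomm
  have hψ : ∀ d z, ψ (d, z) = ψD d * ψC z := fun d z => rfl
  have hφπ : ∀ x : GZ2xZ2, φ (π x) = QIDP.phi0 n x := fun x => rfl
  have hval1 : (1 : ZMod (n + 1)).val = 1 := ZMod.val_one _
  have hval0 : (0 : ZMod (n + 1)).val = 0 := ZMod.val_zero
  -- the two composite identities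
  have hAwB : A * w = B := by rw [hwdef, ← mul_assoc, hA, one_mul]
  have hall : ∀ u : Multiplicative (ZMod 2), u = 1 ∨ u = Multiplicative.ofAdd 1 := by decide
  refine ⟨MonoidHom.toMulEquiv φ ψ ?_ ?_⟩
  · -- ψ ∘ φ = id
    refine QuotientGroup.monoidHom_ext N ?_
    refine Monoid.Coprod.hom_ext ?_ ?_
    · refine MonoidHom.ext fun x => ?_
      rcases hall x with rfl | rfl
      · simp
      · show ψ (φ (π gA)) = π gA
        rw [hφπ, QIDP.phi0_gA, hψ, hψD_sr, hval0]
        simp [hψC, ← hAdef]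
    · refine MonoidHom.ext fun x => ?_
      obtain ⟨u, v⟩ := x
      have hBcase : ψ (φ (π gB)) = π gB := by
        rw [hφπ, QIDP.phi0_gB, hψ, hψD_sr, hval1]
        simp [hψC, zpow_one, hAwB, ← hBdef]
      have hCcase : ψ (φ (π gC)) = π gC := by
        rw [hφπ, QIDP.phi0_gC, hψ, hψC]
        have : (Multiplicative.toAdd (Multiplicative.ofAdd (1 : ZMod 2))).val = 1 := by
          decide
        rw [this]
        show ψD 1 * C ^ 1 = π gC
        rw [map_one, one_mul, pow_one, hCdef]
      rcases hall u with rfl | rfl <;> rcases hall v with rfl | rfl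
      · rw [show ((1, 1) : Multiplicative (ZMod 2) × Multiplicative (ZMod 2)) = 1 from rfl]
        simp
      · exact hCcase
      · exact hBcase
      · simp only [MonoidHom.comp_apply, MonoidHom.id_apply]
        rw [← QIDP.gBgC_eq, map_mul, map_mul, map_mul]
        exact congrArg₂ HMul.hMul hBcase hCcase
  · -- φ ∘ ψ = id
    have hφA : φ A = (sr 0, 1) := by rw [hAdef, hφπ, QIDP.phi0_gA]
    have hφC : φ C = (1, Multiplicative.ofAdd 1) := by rw [hCdef, hφπ, QIDP.phi0_gC]
    have hφw : φ w = (r 1, 1) := by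
      rw [hwdef, map_mul, hφA, hBdef, hφπ, QIDP.phi0_gB, Prod.mk_mul_mk, sr_mul_sr,
        sub_zero, mul_one]
    have hz2 : ∀ z : Multiplicative (ZMod 2),
        (Multiplicative.ofAdd (1 : ZMod 2)) ^ (Multiplicative.toAdd z).val = z := by
      decide
    have hφψC : ∀ z, φ (ψC z) = (1, z) := by
      intro z
      rw [hψC, map_pow, hφC, Prod.pow_mk, one_pow, hz2]
    have hφwk : ∀ k : ℕ, φ (w ^ (k : ℤ)) = (r (k : ZMod (n + 1)), 1) := by
      intro k
      rw [zpow_natCast, map_pow, hφw, Prod.pow_mk, one_pow, r_one_pow]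
    have hφψD : ∀ d : DihedralGroup (n + 1), φ (ψD d) = (d, 1) := by
      intro d
      rcases d with i | i
      · rw [hψD_r, hφwk, ZMod.natCast_val, ZMod.cast_id]
      · rw [hψD_sr, map_mul, hφA, hφwk, ZMod.natCast_val, ZMod.cast_id,
          Prod.mk_mul_mk, sr_mul_r, zero_add, mul_one]
    refine MonoidHom.ext fun p => ?_
    obtain ⟨d, z⟩ := p
    show φ (ψ (d, z)) = (d, z)
    rw [hψ, map_mul, hφψD, hφψC, Prod.mk_mul_mk, mul_one, one_mul]
end

section
/- Let G be a group with a finite normal subgroup T, φ : G → G/T, and let H₁, H₂ be subgroups of G intersecting T trivially such that φ(H₁) ∩ φ(H₂) is a free group of finite rank. Then H₁ ∩ H₂ is free of finite rank and r̄(H₁ ∩ H₂) ≤ |T| · r̄(φ(H₁) ∩ φ(H₂)), where r̄ denotes reduced rank max(0, rank − 1). -/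
open Subgroup

section SharpSchreier

variable {G : Type*} [Group G] {H : Subgroup G}

private abbrev QR (H : Subgroup G) := Quotient (QuotientGroup.rightRel H)

/-- right multiplication on right cosets -/
private def rmul (H : Subgroup G) (s : G) : QR H → QR H :=
  Quotient.map' (· * s) (fun a b hab => by
    rw [QuotientGroup.rightRel_apply] at hab ⊢
    simpa [mul_assoc] using hab)

private lemma rmul_mk (s x : G) : rmul H s (Quotient.mk'' x) = Quotient.mk'' (x * s) := rfl

private lemma rmul_left_inverse (s : G) :
    Function.LeftInverse (rmul H s⁻¹) (rmul H s) := fun q => by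
  induction q using Quotient.inductionOn'
  simp [rmul_mk]

private lemma rmul_injective (s : G) : Function.Injective (rmul H s) :=
  (rmul_left_inverse s).injective

private lemma key_step [Finite (QR H)] {S : Set G} (hS : Subgroup.closure S = ⊤)
    (C : Set (QR H)) (hC1 : Quotient.mk'' (1 : G) ∈ C)
    (hstep : ∀ x : G, Quotient.mk'' x ∈ C → ∀ s ∈ S, Quotient.mk'' (x * s) ∈ C)
    (g : G) : Quotient.mk'' g ∈ C := by
  have hC : ∀ s : G, (∀ q ∈ C, rmul H s q ∈ C) → ∀ q ∈ C, rmul H s⁻¹ q ∈ C := by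
    intro s hs q hq
    have h1 : rmul H s '' C ⊆ C := by rintro - ⟨c, hc, rfl⟩; exact hs c hc
    have h2 : rmul H s '' C = C :=
      Set.eq_of_subset_of_ncard_le h1
        (Set.ncard_image_of_injective C (rmul_injective s)).ge C.toFinite
    rw [← h2] at hq
    obtain ⟨c, hc, hcq⟩ := hq
    rwa [← hcq, rmul_left_inverse s c]
  let K : Subgroup G :=
    { carrier := {g | (∀ q ∈ C, rmul H g q ∈ C) ∧ ∀ q ∈ C, rmul H g⁻¹ q ∈ C}
      one_mem' := by
        constructor <;> intro q hq <;>
          · induction q using Quotient.inductionOn'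
            simpa [rmul_mk] using hq
      mul_mem' := by
        rintro a b ⟨ha1, ha2⟩ ⟨hb1, hb2⟩
        constructor
        · intro q hq
          have : rmul H (a * b) q = rmul H b (rmul H a q) := by
            induction q using Quotient.inductionOn'
            simp [rmul_mk, mul_assoc]
          rw [this]; exact hb1 _ (ha1 _ hq)
        · intro q hq
          have : rmul H (a * b)⁻¹ q = rmul H a⁻¹ (rmul H b⁻¹ q) := by
            induction q using Quotient.inductionOn'
            simp [rmul_mk, mul_assoc]
          rw [this]; exact ha2 _ (hb2 _ hq)
      inv_mem' := by
        rintro a ⟨ha1, ha2⟩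
        exact ⟨ha2, by simpa using ha1⟩ }
  have hSK : S ⊆ K := by
    intro s hs
    have h1 : ∀ q ∈ C, rmul H s q ∈ C := by
      intro q hq
      induction q using Quotient.inductionOn'
      exact hstep _ hq s hs
    exact ⟨h1, hC s h1⟩
  have hK : K = ⊤ := top_unique (by rw [← hS]; exact Subgroup.closure_le K |>.mpr hSK)
  have hg : g ∈ K := hK ▸ Subgroup.mem_top g
  simpa [rmul_mk] using hg.1 (Quotient.mk'' (1 : G)) hC1

private lemma grow [DecidableEq G] [Finite (QR H)] {S : Finset G}
    (hS : Subgroup.closure (S : Set G) = ⊤) :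
    ∀ (k : ℕ) (R : Finset G), (1 : G) ∈ R →
      (∀ r ∈ R, r ≠ 1 → ∃ r' ∈ R, ∃ s ∈ S, r = r' * s) →
      (Set.InjOn (Quotient.mk'' : G → QR H) R) →
      Nat.card (QR H) ≤ R.card + k →
      ∃ R' : Finset G, (1 : G) ∈ R' ∧
        (∀ r ∈ R', r ≠ 1 → ∃ r'' ∈ R', ∃ s ∈ S, r = r'' * s) ∧
        (Set.InjOn (Quotient.mk'' : G → QR H) R') ∧
        ∀ q : QR H, ∃ r ∈ R', Quotient.mk'' r = q := by
  intro k
  induction k with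
  | zero =>
    intro R h1 hexp hinj hcard
    refine ⟨R, h1, hexp, hinj, ?_⟩
    by_contra hsurj
    push_neg at hsurj
    obtain ⟨q₀, hq₀⟩ := hsurj
    classical
    have : Fintype (QR H) := Fintype.ofFinite _
    have himg : (R.image (Quotient.mk'' : G → QR H)).card = R.card :=
      Finset.card_image_of_injOn hinj
    have hlt : (R.image (Quotient.mk'' : G → QR H)).card < Fintype.card (QR H) := by
      apply Finset.card_lt_card
      refine ⟨Finset.subset_univ _, fun hsub => ?_⟩
      obtain ⟨r, hr, hrq⟩ := Finset.mem_image.mp (hsub (Finset.mem_univ q₀))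
      exact hq₀ r hr hrq
    rw [Nat.card_eq_fintype_card] at hcard
    omega
  | succ k ih =>
    intro R h1 hexp hinj hcard
    by_cases hsurj : ∀ q : QR H, ∃ r ∈ R, Quotient.mk'' r = q
    · exact ⟨R, h1, hexp, hinj, hsurj⟩
    push_neg at hsurj
    obtain ⟨q₀, hq₀⟩ := hsurj
    set C : Set (QR H) := (Quotient.mk'' : G → QR H) '' R with hCdef
    have hC1 : Quotient.mk'' (1 : G) ∈ C := ⟨1, by exact_mod_cast h1, rfl⟩
    have hnot : ¬ ∀ x : G, Quotient.mk'' x ∈ C → ∀ s ∈ (S : Set G),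
        Quotient.mk'' (x * s) ∈ C := by
      intro hstep
      induction q₀ using Quotient.inductionOn' with
      | h g₀ =>
        obtain ⟨r, hr, hrq⟩ := key_step hS C hC1 hstep g₀
        exact hq₀ r (by exact_mod_cast hr) hrq
    push_neg at hnot
    obtain ⟨x, hxC, s, hsS, hxs⟩ := hnot
    obtain ⟨r, hrR, hrx⟩ := hxC
    have hrsC : Quotient.mk'' (r * s) ∉ C := by
      have : (Quotient.mk'' (r * s) : QR H) = Quotient.mk'' (x * s) := by
        rw [← rmul_mk, ← rmul_mk, hrx]
      rwa [this]
    have hrsR : r * s ∉ R := fun h => hrsC ⟨r * s, h, rfl⟩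
    have hrR' : r ∈ R := by exact_mod_cast hrR
    refine ih (insert (r * s) R) (Finset.mem_insert_of_mem h1) ?_ ?_ ?_
    · intro a ha hane
      rcases Finset.mem_insert.mp ha with h | h
      · exact ⟨r, Finset.mem_insert_of_mem hrR', s, hsS, h⟩
      · obtain ⟨r', hr', s', hs', heq⟩ := hexp a h hane
        exact ⟨r', Finset.mem_insert_of_mem hr', s', hs', heq⟩
    · rw [Finset.coe_insert, Set.injOn_insert (by exact_mod_cast hrsR)]
      exact ⟨hinj, fun h => hrsC (by rwa [hCdef])⟩
    · rw [Finset.card_insert_of_notMem hrsR]; omega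

private lemma exists_good_transversal [DecidableEq G] [H.FiniteIndex] {S : Finset G}
    (hS : Subgroup.closure (S : Set G) = ⊤) :
    ∃ R : Finset G, (IsComplement (H : Set G) (R : Set G)) ∧ (1 : G) ∈ R ∧
      (∀ r ∈ R, r ≠ 1 → ∃ r' ∈ R, ∃ s ∈ S, r = r' * s) := by
  have : Finite (G ⧸ H) := H.finite_quotient_of_finiteIndex
  have : Finite (QR H) := Finite.of_equiv _ (QuotientGroup.quotientRightRelEquivQuotientLeftRel H).symm
  obtain ⟨R, h1, hexp, hinj, hsurj⟩ := grow (H := H) hS (Nat.card (QR H)) {1}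
    (Finset.mem_singleton_self 1)
    (by intro r hr hne; exact absurd (Finset.mem_singleton.mp hr) hne)
    (by intro a ha b hb _; simp_all)
    (by simp [Nat.le_add_left])
  refine ⟨R, ?_, h1, hexp⟩
  rw [isComplement_subgroup_left_iff_existsUnique_quotientMk'']
  intro q
  obtain ⟨r, hr, hrq⟩ := hsurj q
  refine ⟨⟨r, by exact_mod_cast hr⟩, hrq, ?_⟩
  rintro ⟨r', hr'⟩ h
  exact Subtype.ext (hinj (by exact_mod_cast hr') (by exact_mod_cast hr) (h.trans hrq.symm))

end SharpSchreier
section SharpSchreier2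

open Subgroup
open scoped Pointwise

variable {G : Type*} [Group G]

private theorem exists_finset_card_add_index_le (H : Subgroup G) [H.FiniteIndex]
    {S : Finset G} (hS : Subgroup.closure (S : Set G) = ⊤) :
    ∃ T : Finset H, T.card + H.index ≤ H.index * S.card + 1 ∧
      Subgroup.closure (T : Set H) = ⊤ := by
  classical
  obtain ⟨R, hR, hR1, hexp⟩ := exists_good_transversal (H := H) hS
  -- the Schreier generating set
  set f : G → H := fun g => ⟨g * (hR.toRightFun g : G)⁻¹, hR.mul_inv_toRightFun_mem g⟩ with hf
  have hT : Subgroup.closure (((R * S).image f : Finset H) : Set H) = ⊤ :=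
    Subgroup.closure_mul_image_eq_top' hR hR1 hS
  -- representatives are fixed by `toFun`
  have hfix : ∀ g ∈ R, f g = 1 := by
    intro g hg
    have h1 : (hR.toRightFun g : G) = g := by
      have := (isComplement_iff_existsUnique_mul_inv_mem.mp hR g).unique
        (hR.mul_inv_toRightFun_mem g) (y₂ := ⟨g, by exact_mod_cast hg⟩)
        (by simpa using H.one_mem)
      exact congrArg Subtype.val this
    simp [hf, h1, Subtype.ext_iff]
  -- non-identity representatives occur as products
  have hsub : R.erase 1 ⊆ R * S := by
    intro r hr
    obtain ⟨hrne, hrR⟩ := Finset.mem_erase.mp hr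
    obtain ⟨r', hr', s, hs, rfl⟩ := hexp r hrR hrne
    exact Finset.mul_mem_mul hr' hs
  set T : Finset H := ((R * S).image f).erase 1 with hTdef
  have hTtop : Subgroup.closure (T : Set H) = ⊤ := by
    rw [eq_top_iff, ← hT, Subgroup.closure_le]
    intro x hx
    rcases eq_or_ne x 1 with rfl | hne
    · exact Subgroup.one_mem _
    · exact Subgroup.subset_closure (by exact_mod_cast Finset.mem_erase.mpr ⟨hne, by exact_mod_cast hx⟩)
  refine ⟨T, ?_, hTtop⟩
  -- cardinality count
  have hRcard : R.card = H.index := by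
    have := hR.card_right
    rwa [Nat.card_coe_set_eq, Set.ncard_coe_finset] at this
  have hTsub : T ⊆ ((R * S) \ R.erase 1).image f := by
    intro x hx
    obtain ⟨hxne, hx⟩ := Finset.mem_erase.mp hx
    obtain ⟨g, hg, rfl⟩ := Finset.mem_image.mp hx
    refine Finset.mem_image.mpr ⟨g, Finset.mem_sdiff.mpr ⟨hg, fun hgR => ?_⟩, rfl⟩
    exact hxne (hfix g (Finset.mem_of_mem_erase hgR))
  have h1 : T.card ≤ ((R * S) \ R.erase 1).card :=
    le_trans (Finset.card_le_card hTsub) Finset.card_image_le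
  have h2 : ((R * S) \ R.erase 1).card = (R * S).card - (R.erase 1).card :=
    Finset.card_sdiff_of_subset hsub
  have h3 : (R * S).card ≤ R.card * S.card := Finset.card_mul_le
  have h4 : (R.erase 1).card = R.card - 1 := Finset.card_erase_of_mem hR1
  have h5 : 1 ≤ R.card := Finset.card_pos.mpr ⟨1, hR1⟩
  have h6 : (R.erase 1).card ≤ (R * S).card := Finset.card_le_card hsub
  rw [← hRcard]
  set m := R.card * S.card
  omega

private theorem rank_add_index_le (H : Subgroup G) [Group.FG G] [H.FiniteIndex] :
    Group.rank H + H.index ≤ H.index * Group.rank G + 1 := by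
  haveI := H.fg_of_index_ne_zero
  obtain ⟨S, hS₀, hS⟩ := Group.rank_spec G
  obtain ⟨T, hT₀, hT⟩ := exists_finset_card_add_index_le H hS
  have := Group.rank_le hT
  rw [hS₀] at hT₀
  omega

end SharpSchreier2

/-- Let `T` be a finite normal subgroup of `G`, `φ : G → G/T`, and `H₁`, `H₂` subgroups
intersecting `T` trivially with `φ(H₁) ∩ φ(H₂)` free of finite rank. Then `H₁ ∩ H₂`
is free of finite rank and `r̄(H₁ ∩ H₂) ≤ |T| ⬝ r̄(φ(H₁) ∩ φ(H₂))`, with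
`r̄ = rank - 1` (truncated subtraction). -/
theorem reduced_rank_inter_le_card_mul {G : Type*} [Group G] (T : Subgroup G) [T.Normal]
    [Finite T] (H₁ H₂ : Subgroup G) (h₁ : H₁ ⊓ T = ⊥) (h₂ : H₂ ⊓ T = ⊥)
    [IsFreeGroup ↥(H₁.map (QuotientGroup.mk' T) ⊓ H₂.map (QuotientGroup.mk' T))]
    [Group.FG ↥(H₁.map (QuotientGroup.mk' T) ⊓ H₂.map (QuotientGroup.mk' T))] :
    ∃ (_ : IsFreeGroup ↥(H₁ ⊓ H₂)) (hfg : Group.FG ↥(H₁ ⊓ H₂)),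
      @Group.rank _ _ hfg - 1 ≤
        Nat.card T *
          (Group.rank ↥(H₁.map (QuotientGroup.mk' T) ⊓ H₂.map (QuotientGroup.mk' T)) - 1) := by
  classical
  set φ := QuotientGroup.mk' T with hφ
  set Q : Subgroup (G ⧸ T) := H₁.map φ ⊓ H₂.map φ with hQdef
  set K : Subgroup G := H₁ ⊓ H₂ with hKdef
  have hmem : ∀ x : K, φ x.1 ∈ Q :=
    fun x => Subgroup.mem_inf.mpr
      ⟨Subgroup.mem_map_of_mem φ x.2.1, Subgroup.mem_map_of_mem φ x.2.2⟩
  let ψ : ↥K →* ↥Q := (φ.comp K.subtype).codRestrict Q hmem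
  have hψ : ∀ x : ↥K, (ψ x : G ⧸ T) = φ x.1 := fun x => rfl
  have hinj : Function.Injective ψ := by
    intro x y hxy
    have hφeq : φ x.1 = φ y.1 := congrArg Subtype.val hxy
    have hTmem : x.1⁻¹ * y.1 ∈ T := by
      rw [← QuotientGroup.ker_mk' T]
      show φ (x.1⁻¹ * y.1) = 1
      rw [map_mul, map_inv, hφeq, inv_mul_cancel]
    have hbot : x.1⁻¹ * y.1 ∈ H₁ ⊓ T :=
      ⟨H₁.mul_mem (H₁.inv_mem x.2.1) y.2.1, hTmem⟩
    rw [h₁, Subgroup.mem_bot] at hbot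
    exact Subtype.ext (by rw [← inv_mul_eq_one]; exact hbot)
  set P := ψ.range with hPdef
  -- labels in T
  have hq1 : ∀ q : ↥Q, ∃ x, x ∈ H₁ ∧ φ x = q.1 := fun q => by
    obtain ⟨x, hx, hxq⟩ := Subgroup.mem_map.mp (Subgroup.mem_inf.mp q.2).1
    exact ⟨x, hx, hxq⟩
  have hq2 : ∀ q : ↥Q, ∃ x, x ∈ H₂ ∧ φ x = q.1 := fun q => by
    obtain ⟨x, hx, hxq⟩ := Subgroup.mem_map.mp (Subgroup.mem_inf.mp q.2).2
    exact ⟨x, hx, hxq⟩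
  choose a haH haφ using hq1
  choose b hbH hbφ using hq2
  have habT : ∀ q : ↥Q, a q * (b q)⁻¹ ∈ T := fun q => by
    rw [← QuotientGroup.ker_mk' T]
    show φ (a q * (b q)⁻¹) = 1
    rw [map_mul, map_inv, haφ, hbφ, mul_inv_cancel]
  set F : ↥Q → ↥T := fun q => ⟨a q * (b q)⁻¹, habT q⟩ with hFdef
  have hF : ∀ q q' : ↥Q, F q = F q' → q⁻¹ * q' ∈ P := by
    intro q q' h
    have hab : a q * (b q)⁻¹ = a q' * (b q')⁻¹ := congrArg Subtype.val h
    have hx : (a q)⁻¹ * a q' = (b q)⁻¹ * b q' := by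
      have h2 : a q' = a q * (b q)⁻¹ * b q' := by rw [hab]; group
      rw [h2]; group
    have hxK : (a q)⁻¹ * a q' ∈ K :=
      ⟨H₁.mul_mem (H₁.inv_mem (haH q)) (haH q'),
        by rw [hx]; exact H₂.mul_mem (H₂.inv_mem (hbH q)) (hbH q')⟩
    refine ⟨⟨(a q)⁻¹ * a q', hxK⟩, ?_⟩
    apply Subtype.ext
    show φ ((a q)⁻¹ * a q') = ((q : ↥Q)⁻¹ * q' : ↥Q).1
    rw [map_mul, map_inv, haφ, haφ]
    rfl
  have hFinj : Function.Injective (fun c : ↥Q ⧸ P => F (Quotient.out c)) := by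
    intro c c' h
    have hmem := hF _ _ h
    rw [← QuotientGroup.out_eq' c, ← QuotientGroup.out_eq' c']
    exact QuotientGroup.eq.mpr hmem
  haveI : Finite (↥Q ⧸ P) := Finite.of_injective _ hFinj
  haveI hPfi : P.FiniteIndex := Subgroup.finiteIndex_of_finite_quotient (H := P)
  have hindex_le : P.index ≤ Nat.card T := by
    rw [Subgroup.index_eq_card]
    exact Nat.card_le_card_of_injective _ hFinj
  -- instances
  let e : ↥K ≃* ↥P := MonoidHom.ofInjective hinj
  haveI iK : IsFreeGroup ↥K := IsFreeGroup.ofMulEquiv e.symm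
  haveI fP : Group.FG ↥P := Subgroup.fg_of_index_ne_zero P
  haveI fK : Group.FG ↥K := Group.fg_of_surjective (f := e.symm.toMonoidHom) e.symm.surjective
  have hrank : Group.rank ↥K = Group.rank ↥P := Group.rank_congr e
  have hmain := rank_add_index_le P
  refine ⟨iK, fK, ?_⟩
  have hn1 : 1 ≤ P.index := Nat.one_le_iff_ne_zero.mpr hPfi.index_ne_zero
  rw [hrank]
  rcases Nat.eq_zero_or_pos (Group.rank ↥Q) with hk | hk
  · rw [hk] at hmain ⊢
    simp only [Nat.mul_zero, Nat.zero_add] at hmain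
    omega
  · obtain ⟨k', hk'⟩ : ∃ k', Group.rank ↥Q = k' + 1 := ⟨Group.rank ↥Q - 1, by omega⟩
    rw [hk'] at hmain ⊢
    have h8 : P.index * (k' + 1) = P.index * k' + P.index := Nat.mul_succ _ _
    have h7 : P.index * k' ≤ Nat.card T * k' := Nat.mul_le_mul_right k' hindex_le
    simp only [Nat.add_sub_cancel]
    omega
end
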